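/- arXiv:1010.5577 — 2 statements merged into one kernel-verified Lean document; each statement's English description precedes it below -/
import Mathlib

section
/- Let Σ = (ρ; M_1,…,M_n) be a test on a finite-dimensional complex Hilbert space H, let E_1,…,E_n be events with E_i defined by M_i for each i, let K be a subsequence of (n] with K < i ≤ n, and let j be an element of K, with all conditional probabilities involved well-defined (nonzero conditioning probabilities). If Ind_Σ(E_i | E_j; 𝔼_{K∖j}) holds, then Ind_Σ(E_i | Ē_j; 𝔼_{K∖j}) holds, i.e. Pr_Σ[E_i | 𝔼_K^{(j→Ē_j)}] = Pr_Σ[E_i | 𝔼_{K∖j}], where 𝔼_K^{(j→Ē_j)} denotes 𝔼_K with E_j replaced by its complement Ē_j. -/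
open Matrix Finset
open scoped ComplexOrder

/-- A quantum measurement on `ℂ^d`: a finite family of operators indexed by the
outcomes in `spec`, satisfying the completeness condition `∑ Mₘ† Mₘ = I`. -/
structure Measurement (d : ℕ) where
  spec : Finset ℕ
  op : ℕ → Matrix (Fin d) (Fin d) ℂ
  complete : ∑ m ∈ spec, (op m)ᴴ * op m = 1

/-- An event `{M ∈ A}`: a measurement together with a subset of its spectrum. -/
structure QEvent (d : ℕ) where
  meas : Measurement d
  A : Finset ℕ
  sub : A ⊆ meas.spec

/-- The super-operator defined by an event: `ρ ↦ ∑_{m ∈ A} Mₘ ρ Mₘ†`. -/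
noncomputable def QEvent.superop {d : ℕ} (E : QEvent d) (ρ : Matrix (Fin d) (Fin d) ℂ) :
    Matrix (Fin d) (Fin d) ℂ :=
  ∑ m ∈ E.A, E.meas.op m * ρ * (E.meas.op m)ᴴ

/-- The probability of a sequence of events in state `ρ`:
`Pr_ρ[E₁,…,E_k] = tr(𝓔_k(⋯𝓔₁(ρ)⋯))`. -/
noncomputable def PrSeq {d : ℕ} (ρ : Matrix (Fin d) (Fin d) ℂ) (Es : List (QEvent d)) : ℝ :=
  (Matrix.trace (Es.foldl (fun σ E => E.superop σ) ρ)).re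

/-- A density operator: positive semidefinite with trace one. -/
def IsDensityOp {d : ℕ} (ρ : Matrix (Fin d) (Fin d) ℂ) : Prop :=
  ρ.PosSemidef ∧ ρ.trace = 1

/-- A projective measurement: every operator is an orthogonal projection and
distinct operators are orthogonal. -/
def Measurement.IsProjective {d : ℕ} (M : Measurement d) : Prop :=
  (∀ m ∈ M.spec, (M.op m)ᴴ = M.op m ∧ M.op m * M.op m = M.op m) ∧
  ∀ m ∈ M.spec, ∀ m' ∈ M.spec, m ≠ m' → M.op m * M.op m' = 0

/-- The complete event `I_M = {M ∈ spec(M)}`. -/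
def completeEvent {d : ℕ} (M : Measurement d) : QEvent d :=
  ⟨M, M.spec, subset_rfl⟩

/-- The complement `Ē = {M ∈ spec(M) \ A}` of the event `E = {M ∈ A}`. -/
def QEvent.compl {d : ℕ} (E : QEvent d) : QEvent d :=
  ⟨E.meas, E.meas.spec \ E.A, Finset.sdiff_subset⟩

/-- Conditional probability `Pr_ρ[𝔽|𝔼] = Pr_ρ[𝔼,𝔽] / Pr_ρ[𝔼]`. -/
noncomputable def condPrSeq {d : ℕ} (ρ : Matrix (Fin d) (Fin d) ℂ) (Fs Es : List (QEvent d)) : ℝ :=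
  PrSeq ρ (Es ++ Fs) / PrSeq ρ Es

/-- The list of events realizing `Pr_Σ[𝔼_K]` in the test `Σ = (ρ; M₁,…,M_n)`:
all measurements `M₁,…,M_{max K}` are performed; at the indices `i ∈ K` the event
`E i` is used, while at the remaining indices the complete event `I_{M_i}` is used. -/
noncomputable def testList {d : ℕ} (n : ℕ) (Ms : ℕ → Measurement d) (E : ℕ → QEvent d)
    (K : Finset ℕ) : List (QEvent d) :=
  ((List.range' 1 n).filter (fun i => decide (∃ k ∈ K, i ≤ k))).map
    (fun i => if i ∈ K then E i else completeEvent (Ms i))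

/-- The probability `Pr_Σ[𝔼_K]` of the subsequence of events indexed by `K` in the
test `Σ = (ρ; M₁,…,M_n)`. -/
noncomputable def PrTest {d : ℕ} (ρ : Matrix (Fin d) (Fin d) ℂ) (n : ℕ)
    (Ms : ℕ → Measurement d) (E : ℕ → QEvent d) (K : Finset ℕ) : ℝ :=
  PrSeq ρ (testList n Ms E K)

/-- The conditional probability `Pr_Σ[𝔼_L | 𝔼_K]` in a test (for `K < L`, the
concatenation `𝔼_K,𝔼_L` is the subsequence indexed by `K ∪ L`). -/
noncomputable def condPrTest {d : ℕ} (ρ : Matrix (Fin d) (Fin d) ℂ) (n : ℕ)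
    (Ms : ℕ → Measurement d) (E : ℕ → QEvent d) (L K : Finset ℕ) : ℝ :=
  PrTest ρ n Ms E (K ∪ L) / PrTest ρ n Ms E K

/-- Independence `Ind_Σ(E_i | 𝔼_J; 𝔼_{K∖J})`: `Pr_Σ[E_i|𝔼_K] = Pr_Σ[E_i|𝔼_{K∖J}]`. -/
def IndTest {d : ℕ} (ρ : Matrix (Fin d) (Fin d) ℂ) (n : ℕ)
    (Ms : ℕ → Measurement d) (E : ℕ → QEvent d) (i : ℕ) (J K : Finset ℕ) : Prop :=
  condPrTest ρ n Ms E {i} K = condPrTest ρ n Ms E {i} (K \ J)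

/-- Negative independence `NInd_Σ(E_i | 𝔼_K)`: `Pr_Σ[E_i | Ē_K] = Pr_Σ[E_i]`,
where in the conditioning sequence every event of `𝔼_K` is replaced by its complement. -/
def NIndTest {d : ℕ} (ρ : Matrix (Fin d) (Fin d) ℂ) (n : ℕ)
    (Ms : ℕ → Measurement d) (E : ℕ → QEvent d) (i : ℕ) (K : Finset ℕ) : Prop :=
  condPrTest ρ n Ms (Function.update (fun k => (E k).compl) i (E i)) {i} K
    = PrTest ρ n Ms E {i}

/-- `NInd_{Σ,𝔼}(k|l)`: `NInd_Σ(E_k | E₁,…,E_j)` for all `1 ≤ j ≤ l`. -/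
def NIndSeq {d : ℕ} (ρ : Matrix (Fin d) (Fin d) ℂ) (n : ℕ)
    (Ms : ℕ → Measurement d) (E : ℕ → QEvent d) (k l : ℕ) : Prop :=
  ∀ j, 1 ≤ j → j ≤ l → NIndTest ρ n Ms E k (Finset.Icc 1 j)

section Helpers

variable {d : ℕ}

private lemma superop_add' (E : QEvent d) (σ τ : Matrix (Fin d) (Fin d) ℂ) :
    E.superop (σ + τ) = E.superop σ + E.superop τ := by
  simp [QEvent.superop, Matrix.mul_add, Matrix.add_mul, Finset.sum_add_distrib]

private lemma foldl_superop_add (L : List (QEvent d)) (σ τ : Matrix (Fin d) (Fin d) ℂ) :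
    L.foldl (fun σ E => E.superop σ) (σ + τ)
      = L.foldl (fun σ E => E.superop σ) σ + L.foldl (fun σ E => E.superop σ) τ := by
  induction L generalizing σ τ with
  | nil => rfl
  | cons F L ih => simp only [List.foldl_cons, superop_add', ih]

private lemma trace_superop_complete (M : Measurement d) (σ : Matrix (Fin d) (Fin d) ℂ) :
    ((completeEvent M).superop σ).trace = σ.trace := by
  simp only [completeEvent, QEvent.superop]
  rw [Matrix.trace_sum]
  have h : ∀ m ∈ M.spec, (M.op m * σ * (M.op m)ᴴ).trace = (((M.op m)ᴴ * M.op m) * σ).trace := by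
    intro m _
    rw [Matrix.trace_mul_comm, Matrix.mul_assoc]
  rw [Finset.sum_congr rfl h, ← Matrix.trace_sum, ← Finset.sum_mul, M.complete, one_mul]

private lemma PrSeq_append_complete (ρ : Matrix (Fin d) (Fin d) ℂ) (L : List (QEvent d))
    (M : Measurement d) : PrSeq ρ (L ++ [completeEvent M]) = PrSeq ρ L := by
  simp only [PrSeq, List.foldl_append, List.foldl_cons, List.foldl_nil, trace_superop_complete]

private lemma PrTest_eq_full (ρ : Matrix (Fin d) (Fin d) ℂ) (n : ℕ) (Ms : ℕ → Measurement d)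
    (E : ℕ → QEvent d) (K : Finset ℕ) :
    PrTest ρ n Ms E K
      = PrSeq ρ ((List.range' 1 n).map
          (fun i => if i ∈ K then E i else completeEvent (Ms i))) := by
  induction n with
  | zero => rfl
  | succ n ih =>
    unfold PrTest testList at *
    rw [List.range'_concat]
    simp only [List.filter_append, List.map_append]
    by_cases hp : ∃ k ∈ K, 1 + 1 * n ≤ k
    · have hall : List.filter (fun i => decide (∃ k ∈ K, i ≤ k)) (List.range' 1 n)
          = List.range' 1 n := by
        rw [List.filter_eq_self]
        intro a ha
        obtain ⟨k, hk, hnk⟩ := hp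
        have := (List.mem_range'_1.mp ha).2
        simp only [decide_eq_true_eq]
        exact ⟨k, hk, by omega⟩
      rw [hall]
      have : List.filter (fun i => decide (∃ k ∈ K, i ≤ k)) [1 + 1 * n] = [1 + 1 * n] := by
        simp only [List.filter_cons, List.filter_nil, decide_eq_true_eq]
        rw [if_pos hp]
      rw [this]
    · have h1 : List.filter (fun i => decide (∃ k ∈ K, i ≤ k)) [1 + 1 * n] = [] := by
        simp only [List.filter_cons, List.filter_nil, decide_eq_true_eq]
        rw [if_neg hp]
      have h2 : (1 + 1 * n) ∉ K := fun h => hp ⟨1 + 1 * n, h, le_refl _⟩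
      rw [h1, List.map_nil, List.append_nil, ih, List.map_cons, List.map_nil, if_neg h2,
        PrSeq_append_complete]

private lemma PrSeq_split (ρ : Matrix (Fin d) (Fin d) ℂ) (P S : List (QEvent d))
    (X Y Z : QEvent d) (h : ∀ σ, X.superop σ + Y.superop σ = Z.superop σ) :
    PrSeq ρ (P ++ X :: S) + PrSeq ρ (P ++ Y :: S) = PrSeq ρ (P ++ Z :: S) := by
  simp only [PrSeq, List.foldl_append, List.foldl_cons]
  rw [← Complex.add_re, ← Matrix.trace_add, ← foldl_superop_add, h]

private lemma PrTest_add (ρ : Matrix (Fin d) (Fin d) ℂ) (n : ℕ) (Ms : ℕ → Measurement d)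
    (E : ℕ → QEvent d) (K : Finset ℕ) (j : ℕ)
    (hj : j ∈ K) (hj1 : 1 ≤ j) (hjn : j ≤ n) (hmeas : (E j).meas = Ms j) :
    PrTest ρ n Ms E K + PrTest ρ n Ms (Function.update E j (E j).compl) K
      = PrTest ρ n Ms E (K \ {j}) := by
  rw [PrTest_eq_full, PrTest_eq_full, PrTest_eq_full]
  have hsplit : List.range' 1 n = List.range' 1 (j-1) ++ j :: List.range' (j+1) (n-j) := by
    have h1 := List.range'_append (s := 1) (m := j-1) (n := (n-j)+1) (step := 1)
    rw [show 1 + 1 * (j-1) = j by omega, show (j-1)+((n-j)+1) = n by omega] at h1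
    rw [← h1, List.range'_succ]
  rw [hsplit]
  simp only [List.map_append, List.map_cons]
  set f3 : ℕ → QEvent d := fun i => if i ∈ K \ {j} then E i else completeEvent (Ms i) with hf3
  have hag1 : ∀ a : ℕ, a ≠ j →
      (if a ∈ K then E a else completeEvent (Ms a)) = f3 a := by
    intro a haj
    simp only [hf3, Finset.mem_sdiff, Finset.mem_singleton]
    by_cases h : a ∈ K <;> simp [h, haj]
  have hag2 : ∀ a : ℕ, a ≠ j →
      (if a ∈ K then Function.update E j (E j).compl a else completeEvent (Ms a)) = f3 a := by
    intro a haj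
    rw [Function.update_of_ne haj]
    exact hag1 a haj
  have hcong : ∀ (L : List ℕ), (∀ a ∈ L, a ≠ j) →
      ((List.map (fun i => if i ∈ K then E i else completeEvent (Ms i)) L = List.map f3 L) ∧
       (List.map (fun i => if i ∈ K then Function.update E j (E j).compl i
          else completeEvent (Ms i)) L = List.map f3 L)) := by
    intro L hL
    exact ⟨List.map_congr_left fun a ha => hag1 a (hL a ha),
           List.map_congr_left fun a ha => hag2 a (hL a ha)⟩
  have hpre : ∀ a ∈ List.range' 1 (j-1), a ≠ j := by
    intro a ha; have := (List.mem_range'_1.mp ha).2; omega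
  have hsuf : ∀ a ∈ List.range' (j+1) (n-j), a ≠ j := by
    intro a ha; have := (List.mem_range'_1.mp ha).1; omega
  obtain ⟨hp1, hp2⟩ := hcong _ hpre
  obtain ⟨hs1, hs2⟩ := hcong _ hsuf
  rw [hp1, hp2, hs1, hs2, if_pos hj, if_pos hj, Function.update_self]
  have hj3 : j ∉ K \ {j} := by simp
  rw [show (if j ∈ K \ {j} then E j else completeEvent (Ms j)) = completeEvent (Ms j) from
    if_neg hj3]
  apply PrSeq_split
  intro σ
  simp only [QEvent.superop, QEvent.compl, completeEvent, hmeas]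
  rw [add_comm]
  exact Finset.sum_sdiff (hmeas ▸ (E j).sub)

end Helpers

/-- Proposition 4.3: if `j ∈ K` and `Ind_Σ(E_i | E_j; 𝔼_{K∖j})`, then
`Ind_Σ(E_i | Ē_j; 𝔼_{K∖j})`, i.e. `Pr_Σ[E_i | 𝔼_K^{(j→Ē_j)}] = Pr_Σ[E_i | 𝔼_{K∖j}]`. -/
theorem indTest_compl_condition {d : ℕ} (ρ : Matrix (Fin d) (Fin d) ℂ)
    (hρ : IsDensityOp ρ) (n : ℕ) (Ms : ℕ → Measurement d) (E : ℕ → QEvent d)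
    (hE : ∀ k ∈ Finset.Icc 1 n, (E k).meas = Ms k)
    (K : Finset ℕ) (hK : K ⊆ Finset.Icc 1 n)
    (i : ℕ) (hi : i ∈ Finset.Icc 1 n) (hKi : ∀ k ∈ K, k < i)
    (j : ℕ) (hj : j ∈ K)
    (hne : PrTest ρ n Ms E K ≠ 0) (hne' : PrTest ρ n Ms E (K \ {j}) ≠ 0)
    (hne'' : PrTest ρ n Ms (Function.update E j (E j).compl) K ≠ 0)
    (hind : IndTest ρ n Ms E i {j} K) :
    condPrTest ρ n Ms (Function.update E j (E j).compl) {i} K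
      = condPrTest ρ n Ms E {i} (K \ {j}) := by
  simp only [Finset.mem_Icc] at hi
  have hjIcc := hK hj
  simp only [Finset.mem_Icc] at hjIcc
  have hji : j < i := hKi j hj
  have hij : j ≠ i := Nat.ne_of_lt hji
  have hmeas : (E j).meas = Ms j := hE j (hK hj)
  have hjKi : j ∈ K ∪ {i} := Finset.mem_union_left _ hj
  have hset : (K ∪ {i}) \ {j} = (K \ {j}) ∪ {i} := by
    ext a
    simp only [Finset.mem_sdiff, Finset.mem_union, Finset.mem_singleton]
    constructor
    · rintro ⟨h1 | h1, h2⟩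
      · exact Or.inl ⟨h1, h2⟩
      · exact Or.inr h1
    · rintro (⟨h1, h2⟩ | h1)
      · exact ⟨Or.inl h1, h2⟩
      · exact ⟨Or.inr h1, by omega⟩
  have hA := PrTest_add ρ n Ms E K j hj hjIcc.1 hjIcc.2 hmeas
  have hB := PrTest_add ρ n Ms E (K ∪ {i}) j hjKi hjIcc.1 hjIcc.2 hmeas
  rw [hset] at hB
  set a := PrTest ρ n Ms E K
  set a' := PrTest ρ n Ms (Function.update E j (E j).compl) K
  set b := PrTest ρ n Ms E (K \ {j})
  set c := PrTest ρ n Ms E (K ∪ {i})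
  set c' := PrTest ρ n Ms (Function.update E j (E j).compl) (K ∪ {i})
  set dN := PrTest ρ n Ms E ((K \ {j}) ∪ {i})
  unfold IndTest condPrTest at hind
  unfold condPrTest
  rw [div_eq_div_iff hne hne'] at hind
  rw [div_eq_div_iff hne'' hne']
  linear_combination b * hB - dN * hA - hind
end

section
/- (Symmetric Quantum Lovász Local Lemma) Let Σ = (ρ; M_1,…,M_n) be a test on a finite-dimensional complex Hilbert space H, let 𝔼 = E_1,…,E_n be events with E_i defined by M_i for each i, and let d be a dependence radius of the sequence E_1,…,E_n in Σ. Assume Pr_Σ[Ē_1,…,Ē_{i−1}] ≠ 0 for each 1 ≤ i ≤ n. If Pr_Σ[E_i] ≤ p for all 1 ≤ i ≤ n and p · e · (d+1) ≤ 1 (where e is Euler's number), then Pr_Σ[Ē_1,…,Ē_n] > 0. -/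
open Matrix Finset
open scoped ComplexOrder

section QLLLAux

variable {d : ℕ}

namespace QLLL

/-- apply a sequence of event superoperators -/
noncomputable def applySeq (ρ : Matrix (Fin d) (Fin d) ℂ) (l : List (QEvent d)) :
    Matrix (Fin d) (Fin d) ℂ :=
  l.foldl (fun σ E => E.superop σ) ρ

lemma PrSeq_eq_applySeq (ρ : Matrix (Fin d) (Fin d) ℂ) (l : List (QEvent d)) :
    PrSeq ρ l = (applySeq ρ l).trace.re := rfl

lemma applySeq_cons (ρ : Matrix (Fin d) (Fin d) ℂ) (e : QEvent d) (l : List (QEvent d)) :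
    applySeq ρ (e :: l) = applySeq (e.superop ρ) l := rfl

lemma applySeq_append (ρ : Matrix (Fin d) (Fin d) ℂ) (l1 l2 : List (QEvent d)) :
    applySeq ρ (l1 ++ l2) = applySeq (applySeq ρ l1) l2 := List.foldl_append

lemma superop_psd (G : QEvent d) {σ : Matrix (Fin d) (Fin d) ℂ} (h : σ.PosSemidef) :
    (G.superop σ).PosSemidef := by
  unfold QEvent.superop
  refine Finset.sum_induction _ _ (fun a b ha hb => ha.add hb) Matrix.PosSemidef.zero ?_
  exact fun m _ => h.mul_mul_conjTranspose_same _

lemma trace_re_nonneg {A : Matrix (Fin d) (Fin d) ℂ} (h : A.PosSemidef) : 0 ≤ A.trace.re := by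
  have h1 : ∀ i, 0 ≤ A i i := fun i => by
    exact h.diag_nonneg
  have h2 : (0 : ℂ) ≤ A.trace := by
    unfold Matrix.trace
    exact Finset.sum_nonneg fun i _ => h1 i
  exact (Complex.le_def.mp h2).1

lemma trace_re_mono {A B : Matrix (Fin d) (Fin d) ℂ} (h : (B - A).PosSemidef) :
    A.trace.re ≤ B.trace.re := by
  have := trace_re_nonneg h
  rw [Matrix.trace_sub, Complex.sub_re] at this
  linarith

end QLLL
end QLLLAux
namespace QLLL
variable {d : ℕ}

/-- Domination between events: same measurement, smaller outcome set. -/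
def Dom (G1 G2 : QEvent d) : Prop := G1.meas = G2.meas ∧ G1.A ⊆ G2.A

lemma Dom.refl (G : QEvent d) : Dom G G := ⟨rfl, subset_rfl⟩

lemma superop_sub_psd {G1 G2 : QEvent d} (h : Dom G1 G2) {σ τ : Matrix (Fin d) (Fin d) ℂ}
    (hσ : σ.PosSemidef) (hd : (τ - σ).PosSemidef) :
    (G2.superop τ - G1.superop σ).PosSemidef := by
  obtain ⟨hm, hA⟩ := h
  have hτ : τ.PosSemidef := by simpa using hd.add hσ
  have e2 : G1.superop σ = ∑ m ∈ G1.A, G2.meas.op m * σ * (G2.meas.op m)ᴴ := by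
    unfold QEvent.superop; rw [hm]
  have e1 : G2.superop τ = (∑ m ∈ G2.A \ G1.A, G2.meas.op m * τ * (G2.meas.op m)ᴴ)
      + ∑ m ∈ G1.A, G2.meas.op m * τ * (G2.meas.op m)ᴴ := (Finset.sum_sdiff hA).symm
  have key : G2.superop τ - G1.superop σ
      = (∑ m ∈ G2.A \ G1.A, G2.meas.op m * τ * (G2.meas.op m)ᴴ)
        + ∑ m ∈ G1.A, G2.meas.op m * (τ - σ) * (G2.meas.op m)ᴴ := by
    rw [e1, e2, add_sub_assoc, ← Finset.sum_sub_distrib]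
    congr 1
    refine Finset.sum_congr rfl fun m _ => ?_
    rw [mul_sub, sub_mul]
  rw [key]
  have psd_sum : ∀ (s : Finset ℕ) (ω : Matrix (Fin d) (Fin d) ℂ), ω.PosSemidef →
      (∑ m ∈ s, G2.meas.op m * ω * (G2.meas.op m)ᴴ).PosSemidef := fun s ω hω => by
    refine Finset.sum_induction _ _ (fun a b ha hb => ha.add hb) Matrix.PosSemidef.zero ?_
    exact fun m _ => hω.mul_mul_conjTranspose_same _
  exact (psd_sum _ _ hτ).add (psd_sum _ _ hd)

lemma applySeq_mono {l1 l2 : List (QEvent d)} (h : List.Forall₂ Dom l1 l2) :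
    ∀ {σ τ : Matrix (Fin d) (Fin d) ℂ}, σ.PosSemidef → (τ - σ).PosSemidef →
    (applySeq σ l1).PosSemidef ∧ (applySeq τ l2 - applySeq σ l1).PosSemidef := by
  induction h with
  | nil => exact fun hσ hd => ⟨hσ, hd⟩
  | @cons a b l1' l2' hab _ ih =>
    intro σ τ hσ hd
    rw [applySeq_cons, applySeq_cons]
    exact ih (superop_psd _ hσ) (superop_sub_psd hab hσ hd)

lemma applySeq_psd {σ : Matrix (Fin d) (Fin d) ℂ} (hσ : σ.PosSemidef) (l : List (QEvent d)) :
    (applySeq σ l).PosSemidef :=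
  (applySeq_mono (List.forall₂_same.mpr fun x _ => Dom.refl x) hσ (show (σ - σ).PosSemidef by simpa using (Matrix.PosSemidef.zero : (0 : Matrix (Fin d) (Fin d) ℂ).PosSemidef))).1

lemma PrSeq_nonneg {ρ : Matrix (Fin d) (Fin d) ℂ} (hρ : ρ.PosSemidef) (l : List (QEvent d)) :
    0 ≤ PrSeq ρ l :=
  trace_re_nonneg (applySeq_psd hρ l)

/-- splitting a measurement outcome: Pr[l, Ē] + Pr[l, E] = Pr[l]. -/
lemma trace_compl_add (Ek : QEvent d) (σ : Matrix (Fin d) (Fin d) ℂ) :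
    (Ek.compl.superop σ).trace + (Ek.superop σ).trace = σ.trace := by
  unfold QEvent.superop QEvent.compl
  rw [Matrix.trace_sum, Matrix.trace_sum]
  have key : ∀ m, (Ek.meas.op m * σ * (Ek.meas.op m)ᴴ).trace
      = ((Ek.meas.op m)ᴴ * Ek.meas.op m * σ).trace := fun m => by
    rw [Matrix.trace_mul_cycle]
  simp only [key]
  rw [Finset.sum_sdiff Ek.sub, ← Matrix.trace_sum, ← Finset.sum_mul, Ek.meas.complete, one_mul]

lemma PrSeq_compl_add (ρ : Matrix (Fin d) (Fin d) ℂ) (l : List (QEvent d)) (Ek : QEvent d) :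
    PrSeq ρ (l ++ [Ek.compl]) + PrSeq ρ (l ++ [Ek]) = PrSeq ρ l := by
  rw [PrSeq_eq_applySeq, PrSeq_eq_applySeq, PrSeq_eq_applySeq, applySeq_append, applySeq_append]
  have := congrArg Complex.re (trace_compl_add Ek (applySeq ρ l))
  rw [Complex.add_re] at this
  exact this

end QLLL
namespace QLLL
variable {d : ℕ}

lemma mem_range'1 {s n m : ℕ} : m ∈ List.range' s n ↔ s ≤ m ∧ m < s + n := by
  rw [List.mem_range']
  constructor
  · rintro ⟨i, hi, rfl⟩; omega
  · intro h; exact ⟨m - s, by omega, by omega⟩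

lemma testList_eq_map {n : ℕ} (Ms : ℕ → Measurement d) (G : ℕ → QEvent d) (K : Finset ℕ)
    (k : ℕ) (hk : k ∈ K) (hmax : ∀ j ∈ K, j ≤ k) (hkn : k ≤ n) :
    testList n Ms G K
      = (List.range' 1 k).map (fun i => if i ∈ K then G i else completeEvent (Ms i)) := by
  unfold testList
  congr 1
  have hsplit : List.range' 1 n = List.range' 1 k ++ List.range' (1 + k) (n - k) := by
    rw [List.range'_append_1]; congr 1; omega
  rw [hsplit, List.filter_append, List.filter_eq_self.mpr, List.filter_eq_nil_iff.mpr,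
    List.append_nil]
  · intro a ha hpa
    rw [decide_eq_true_eq] at hpa
    obtain ⟨j, hj, haj⟩ := hpa
    have := hmax j hj
    have := mem_range'1.mp ha
    omega
  · intro a ha
    rw [decide_eq_true_eq]
    have := mem_range'1.mp ha
    exact ⟨k, hk, by omega⟩

lemma testList_congr {n : ℕ} (Ms : ℕ → Measurement d) (G G' : ℕ → QEvent d) (K : Finset ℕ)
    (h : ∀ i ∈ K, G i = G' i) : testList n Ms G K = testList n Ms G' K := by
  unfold testList
  refine List.map_congr_left fun i _ => ?_
  by_cases hi : i ∈ K
  · simp [hi, h i hi]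
  · simp [hi]

lemma testList_empty {n : ℕ} (Ms : ℕ → Measurement d) (G : ℕ → QEvent d) :
    testList n Ms G (∅ : Finset ℕ) = [] := by
  unfold testList
  rw [List.filter_eq_nil_iff.mpr, List.map_nil]
  intro a _ hpa
  rw [decide_eq_true_eq] at hpa
  obtain ⟨j, hj, _⟩ := hpa
  exact absurd hj (Finset.notMem_empty j)

lemma testList_Icc {n : ℕ} (Ms : ℕ → Measurement d) (G : ℕ → QEvent d) {k : ℕ} (hkn : k ≤ n) :
    testList n Ms G (Finset.Icc 1 k) = (List.range' 1 k).map G := by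
  rcases Nat.eq_zero_or_pos k with rfl | hk
  · rw [show Finset.Icc 1 0 = (∅ : Finset ℕ) by simp, testList_empty]; rfl
  · rw [testList_eq_map Ms G _ k (by simp [Finset.mem_Icc]; omega)
      (fun j hj => (Finset.mem_Icc.mp hj).2) hkn]
    refine List.map_congr_left fun i hi => ?_
    have := mem_range'1.mp hi
    rw [if_pos (Finset.mem_Icc.mpr (by omega))]

lemma testList_singleton {n : ℕ} (Ms : ℕ → Measurement d) (G : ℕ → QEvent d) {k : ℕ}
    (hk1 : 1 ≤ k) (hkn : k ≤ n) :
    testList n Ms G {k}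
      = (List.range' 1 k).map (fun i => if i = k then G k else completeEvent (Ms i)) := by
  rw [testList_eq_map Ms G _ k (Finset.mem_singleton_self k)
    (fun j hj => le_of_eq (Finset.mem_singleton.mp hj)) hkn]
  refine List.map_congr_left fun i hi => ?_
  by_cases h : i = k <;> simp [h]

end QLLL
namespace QLLL
variable {d : ℕ}

/-- The state after measuring the complements `Ē₁,…,Ē_j`. -/
noncomputable def sigmaP (ρ : Matrix (Fin d) (Fin d) ℂ) (E : ℕ → QEvent d) (j : ℕ) :
    Matrix (Fin d) (Fin d) ℂ :=
  applySeq ρ ((List.range' 1 j).map (fun k => (E k).compl))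

/-- `P j = Pr[Ē₁,…,Ē_j]`. -/
noncomputable def Pval (ρ : Matrix (Fin d) (Fin d) ℂ) (E : ℕ → QEvent d) (j : ℕ) : ℝ :=
  (sigmaP ρ E j).trace.re

/-- `Q k = Pr[Ē₁,…,Ē_{k-1}, E_k]`. -/
noncomputable def Qval (ρ : Matrix (Fin d) (Fin d) ℂ) (E : ℕ → QEvent d) (k : ℕ) : ℝ :=
  ((E k).superop (sigmaP ρ E (k-1))).trace.re

variable {ρ : Matrix (Fin d) (Fin d) ℂ} {E : ℕ → QEvent d}

lemma sigmaP_succ {k : ℕ} (hk : 1 ≤ k) :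
    sigmaP ρ E k = ((E k).compl).superop (sigmaP ρ E (k-1)) := by
  unfold sigmaP
  conv_lhs => rw [show k = (k-1)+1 by omega]
  rw [List.range'_1_concat, List.map_append, applySeq_append, show 1 + (k-1) = k by omega]
  rfl

lemma Pval_nonneg (hρ : ρ.PosSemidef) (j : ℕ) : 0 ≤ Pval ρ E j :=
  trace_re_nonneg (applySeq_psd hρ _)

lemma Pval_zero (hρ : ρ.trace = 1) : Pval ρ E 0 = 1 := by
  unfold Pval sigmaP
  simp [applySeq, hρ]

lemma Pval_succ {k : ℕ} (hk : 1 ≤ k) : Pval ρ E k = Pval ρ E (k-1) - Qval ρ E k := by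
  have := congrArg Complex.re (trace_compl_add (E k) (sigmaP ρ E (k-1)))
  rw [Complex.add_re] at this
  unfold Pval Qval
  rw [sigmaP_succ hk]
  linarith [this]

lemma PrTest_prefix {n : ℕ} (Ms : ℕ → Measurement d) {k : ℕ} (hkn : k ≤ n) :
    PrTest ρ n Ms (fun k => (E k).compl) (Finset.Icc 1 k) = Pval ρ E k := by
  unfold PrTest
  rw [testList_Icc Ms _ hkn]
  rfl

/-- The chain bound: `(1-B)^s · P m ≤ P (m+s)` provided `Q j ≤ B · P (j-1)` below. -/
lemma chain (hρ : ρ.PosSemidef) {B : ℝ} (hc : 0 ≤ 1 - B) {J : ℕ}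
    (claimB : ∀ j, 1 ≤ j → j ≤ J → Qval ρ E j ≤ B * Pval ρ E (j-1)) (m : ℕ) :
    ∀ s, m + s ≤ J → (1-B)^s * Pval ρ E m ≤ Pval ρ E (m+s) := by
  intro s
  induction s with
  | zero => intro _; simp
  | succ s ih =>
    intro hs
    have h1 : (1-B)^s * Pval ρ E m ≤ Pval ρ E (m+s) := ih (by omega)
    have h2 : Qval ρ E (m+s+1) ≤ B * Pval ρ E (m+s) := by
      have := claimB (m+s+1) (by omega) (by omega)
      rwa [show m+s+1-1 = m+s by omega] at this
    have h3 : Pval ρ E (m+s+1) = Pval ρ E (m+s) - Qval ρ E (m+s+1) := by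
      have := Pval_succ (ρ := ρ) (E := E) (k := m+s+1) (by omega)
      rwa [show m+s+1-1 = m+s by omega] at this
    have h4 : (1-B) * ((1-B)^s * Pval ρ E m) ≤ (1-B) * Pval ρ E (m+s) :=
      mul_le_mul_of_nonneg_left h1 hc
    rw [show m + (s+1) = m+s+1 by omega, h3, pow_succ]
    nlinarith [h4, h2]

end QLLL
namespace QLLL
variable {d : ℕ} {ρ : Matrix (Fin d) (Fin d) ℂ} {E : ℕ → QEvent d}

/-- Monotonicity: dropping conditioning events (replacing them by complete events)
can only increase the probability. -/
lemma Qval_le (hρ : ρ.PosSemidef) {n : ℕ} (Ms : ℕ → Measurement d)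
    (hE : ∀ k ∈ Finset.Icc 1 n, (E k).meas = Ms k)
    {k m : ℕ} (hk1 : 1 ≤ k) (hkn : k ≤ n) (hmk : m < k) :
    Qval ρ E k ≤ PrSeq ρ (testList n Ms (Function.update (fun j => (E j).compl) k (E k))
      (Finset.Icc 1 m ∪ {k})) := by
  classical
  set G : ℕ → QEvent d := Function.update (fun j => (E j).compl) k (E k) with hG
  set K : Finset ℕ := Finset.Icc 1 m ∪ {k} with hK
  have hkK : k ∈ K := by simp [hK]
  have hmaxK : ∀ j ∈ K, j ≤ k := by
    intro j hj
    rcases Finset.mem_union.mp hj with h | h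
    · have := Finset.mem_Icc.mp h; omega
    · have := Finset.mem_singleton.mp h; omega
  rw [testList_eq_map Ms G K k hkK hmaxK hkn]
  set g2 : ℕ → QEvent d := fun i => if i ∈ K then G i else completeEvent (Ms i) with hg2
  -- the left list
  have hQ : Qval ρ E k
      = PrSeq ρ (((List.range' 1 (k-1)).map (fun j => (E j).compl)) ++ [E k]) := by
    unfold Qval
    rw [PrSeq_eq_applySeq, applySeq_append]
    rfl
  rw [hQ]
  -- the right list, split
  have hsplit : (List.range' 1 k).map g2 = ((List.range' 1 (k-1)).map g2) ++ [g2 k] := by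
    conv_lhs => rw [show k = (k-1)+1 by omega]
    rw [List.range'_1_concat, List.map_append, show 1 + (k-1) = k by omega, List.map_singleton]
  rw [hsplit]
  -- Forall₂ Dom between the two lists
  have hfa : List.Forall₂ Dom (((List.range' 1 (k-1)).map (fun j => (E j).compl)) ++ [E k])
      (((List.range' 1 (k-1)).map g2) ++ [g2 k]) := by
    refine List.rel_append ?_ ?_
    · rw [List.forall₂_map_left_iff, List.forall₂_map_right_iff, List.forall₂_same]
      intro i hi
      have hi' := mem_range'1.mp hi
      have hik : i ≠ k := by omega
      have hGi : G i = (E i).compl := by rw [hG, Function.update_of_ne hik]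
      by_cases him : i ∈ K
      · rw [hg2]; simp only [him, if_pos, hGi]; exact Dom.refl _
      · have hmeas : (E i).meas = Ms i := hE i (Finset.mem_Icc.mpr (by omega))
        rw [hg2]; simp only [him, if_neg, not_false_iff]
        refine ⟨?_, ?_⟩
        · show (E i).meas = Ms i
          exact hmeas
        · show (E i).meas.spec \ (E i).A ⊆ (Ms i).spec
          rw [← hmeas]
          exact Finset.sdiff_subset
    · have hGk : g2 k = E k := by
        rw [hg2]; simp only [hkK, if_pos]
        rw [hG, Function.update_self]
      rw [hGk]
      exact List.Forall₂.cons (Dom.refl _) List.Forall₂.nil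
  have := applySeq_mono hfa hρ
    (show (ρ - ρ).PosSemidef by
      simpa using (Matrix.PosSemidef.zero : (0 : Matrix (Fin d) (Fin d) ℂ).PosSemidef))
  exact trace_re_mono this.2

end QLLL
namespace QLLL
variable {d : ℕ} {ρ : Matrix (Fin d) (Fin d) ℂ} {E : ℕ → QEvent d}

lemma factD_zero {n : ℕ} (Ms : ℕ → Measurement d) (k : ℕ) :
    PrSeq ρ (testList n Ms (Function.update (fun j => (E j).compl) k (E k)) ({k} : Finset ℕ))
      = PrTest ρ n Ms E {k} := by
  unfold PrTest
  congr 1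
  refine testList_congr Ms _ E _ fun i hi => ?_
  rw [Finset.mem_singleton.mp hi, Function.update_self]

lemma factD_pos {n d₀ : ℕ} (Ms : ℕ → Measurement d)
    (hrad : ∀ l k : ℕ, 1 ≤ l → l < k → k ≤ n → ¬ NIndSeq ρ n Ms E k l → k ≤ l + d₀)
    {k m : ℕ} (hm1 : 1 ≤ m) (hmd : m + d₀ < k) (hkn : k ≤ n)
    (hPm : Pval ρ E m ≠ 0) :
    PrSeq ρ (testList n Ms (Function.update (fun j => (E j).compl) k (E k))
        (Finset.Icc 1 m ∪ {k}))
      = PrTest ρ n Ms E {k} * Pval ρ E m := by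
  have hnind : NIndTest ρ n Ms E k (Finset.Icc 1 m) := by
    by_contra h
    have hns : ¬ NIndSeq ρ n Ms E k m := fun hs => h (hs m hm1 le_rfl)
    have := hrad m k hm1 (by omega) hkn hns
    omega
  unfold NIndTest condPrTest at hnind
  have hcongr : PrTest ρ n Ms (Function.update (fun j => (E j).compl) k (E k))
      (Finset.Icc 1 m) = Pval ρ E m := by
    rw [show PrTest ρ n Ms (Function.update (fun j => (E j).compl) k (E k)) (Finset.Icc 1 m)
        = PrTest ρ n Ms (fun j => (E j).compl) (Finset.Icc 1 m) by
      unfold PrTest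
      congr 1
      exact testList_congr Ms _ _ _ fun i hi =>
        Function.update_of_ne (by have := Finset.mem_Icc.mp hi; omega) _ _]
    exact PrTest_prefix Ms (by omega)
  rw [hcongr] at hnind
  exact (div_eq_iff hPm).mp hnind

lemma exp_pow_bound {d₀ : ℕ} (hd : d₀ ≠ 0) {c : ℝ} (hc : (d₀:ℝ)/(d₀+1) ≤ c) (hc1 : c ≤ 1)
    {t : ℕ} (ht : t ≤ d₀) : 1 ≤ Real.exp 1 * c^t := by
  have hx : (1:ℝ) ≤ (d₀:ℝ) := by exact_mod_cast Nat.one_le_iff_ne_zero.mpr hd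
  have h1 : ((d₀:ℝ)+1)/(d₀:ℝ) ≤ Real.exp (1/(d₀:ℝ)) := by
    have h := Real.add_one_le_exp (1/(d₀:ℝ))
    have he : ((d₀:ℝ)+1)/(d₀:ℝ) = 1/(d₀:ℝ) + 1 := by field_simp; ring
    linarith
  have hpos : (0:ℝ) < (d₀:ℝ)/((d₀:ℝ)+1) := by positivity
  have h2 : Real.exp (-(1/(d₀:ℝ))) ≤ (d₀:ℝ)/((d₀:ℝ)+1) := by
    rw [Real.exp_neg, show (d₀:ℝ)/((d₀:ℝ)+1) = (((d₀:ℝ)+1)/(d₀:ℝ))⁻¹ by rw [inv_div]]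
    exact inv_anti₀ (by positivity) h1
  have h3 : Real.exp (-1) ≤ c^t := by
    have e1 : Real.exp (-1) = Real.exp (-(1/(d₀:ℝ)))^d₀ := by
      rw [← Real.exp_nat_mul]
      congr 1
      field_simp
    calc Real.exp (-1) = Real.exp (-(1/(d₀:ℝ)))^d₀ := e1
      _ ≤ ((d₀:ℝ)/((d₀:ℝ)+1))^d₀ := pow_le_pow_left₀ (Real.exp_pos _).le h2 _
      _ ≤ c^d₀ := pow_le_pow_left₀ hpos.le hc _
      _ ≤ c^t := pow_le_pow_of_le_one (le_trans hpos.le hc) hc1 ht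
  calc (1:ℝ) = Real.exp 1 * Real.exp (-1) := by rw [← Real.exp_add]; norm_num
    _ ≤ Real.exp 1 * c^t := mul_le_mul_of_nonneg_left h3 (Real.exp_pos 1).le

end QLLL

/-- Symmetric Quantum Lovász Local Lemma: if `d₀` is a dependence
radius of `E₁,…,E_n` in `Σ` (i.e. `NDep_{Σ,𝔼}(k|l)` implies `l ≥ k − d₀`),
`Pr_Σ[E_i] ≤ p` for all `1 ≤ i ≤ n`, `p · e · (d₀+1) ≤ 1`, and
`Pr_Σ[Ē₁,…,Ē_{i−1}] ≠ 0` for each `1 ≤ i ≤ n`, then `Pr_Σ[Ē₁,…,Ē_n] > 0`. -/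
theorem symmetric_quantum_lll {d : ℕ} (ρ : Matrix (Fin d) (Fin d) ℂ)
    (hρ : IsDensityOp ρ) (n : ℕ) (Ms : ℕ → Measurement d) (E : ℕ → QEvent d)
    (hE : ∀ k ∈ Finset.Icc 1 n, (E k).meas = Ms k)
    (d₀ : ℕ)
    (hrad : ∀ l k : ℕ, 1 ≤ l → l < k → k ≤ n →
      ¬ NIndSeq ρ n Ms E k l → k ≤ l + d₀)
    (p : ℝ) (hp : ∀ i ∈ Finset.Icc 1 n, PrTest ρ n Ms E {i} ≤ p)
    (hpe : p * Real.exp 1 * (d₀ + 1) ≤ 1)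
    (hne : ∀ i ∈ Finset.Icc 1 n,
      PrTest ρ n Ms (fun k => (E k).compl) (Finset.Ico 1 i) ≠ 0) :
    0 < PrTest ρ n Ms (fun k => (E k).compl) (Finset.Icc 1 n) := by
  classical
  obtain ⟨hpsd, htr⟩ := hρ
  rcases Nat.eq_zero_or_pos n with rfl | hn
  · -- trivial case n = 0
    rw [show Finset.Icc 1 0 = (∅ : Finset ℕ) by simp]
    unfold PrTest
    rw [QLLL.testList_empty]
    show (0:ℝ) < (Matrix.trace ρ).re
    rw [htr]
    norm_num
  -- abbreviations
  have hPne : ∀ j, j ≤ n - 1 → QLLL.Pval ρ E j ≠ 0 := by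
    intro j hj
    have h1 : j + 1 ∈ Finset.Icc 1 n := Finset.mem_Icc.mpr (by omega)
    have h2 := hne (j+1) h1
    rwa [show Finset.Ico 1 (j+1) = Finset.Icc 1 j by rw [Finset.Ico_add_one_right_eq_Icc],
      QLLL.PrTest_prefix Ms (by omega)] at h2
  have hPnonneg : ∀ j, 0 ≤ QLLL.Pval ρ E j := QLLL.Pval_nonneg hpsd
  have hpknonneg : ∀ k, 0 ≤ PrTest ρ n Ms E {k} := fun k =>
    QLLL.PrSeq_nonneg hpsd _
  have hp0 : 0 ≤ p := le_trans (hpknonneg 1) (hp 1 (Finset.mem_Icc.mpr (by omega)))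
  have hexp1 : (1:ℝ) ≤ Real.exp 1 := by
    have := Real.add_one_le_exp (1:ℝ); linarith
  set B : ℝ := if d₀ = 0 then p else p * Real.exp 1 with hB
  have hB0 : 0 ≤ B := by
    rw [hB]; split
    · exact hp0
    · exact mul_nonneg hp0 (Real.exp_pos 1).le
  have hBp : p ≤ B := by
    rw [hB]; split_ifs with h
    · exact le_rfl
    · nlinarith
  have hBd : B * ((d₀:ℝ)+1) ≤ 1 := by
    rw [hB]; split_ifs with h
    · subst h; push_cast at hpe ⊢; nlinarith
    · push_cast at hpe ⊢; linarith
  have hB1 : B < 1 := by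
    rw [hB]; split_ifs with h
    · subst h
      push_cast at hpe
      nlinarith [Real.exp_one_gt_d9]
    · have hd1 : (1:ℝ) ≤ (d₀:ℝ) := by
        exact_mod_cast Nat.one_le_iff_ne_zero.mpr h
      rw [hB] at hBd hB0
      simp only [if_neg h] at hBd hB0
      nlinarith
  have hc0 : 0 ≤ 1 - B := by linarith
  -- the main claim, by strong induction
  have claim : ∀ k, 1 ≤ k → k ≤ n → QLLL.Qval ρ E k ≤ B * QLLL.Pval ρ E (k-1) := by
    intro k
    induction k using Nat.strong_induction_on with
    | _ k ih =>
      intro hk1 hkn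
      set t : ℕ := min (k-1) d₀ with ht
      set m : ℕ := k - 1 - t with hm
      have hmt : m + t = k - 1 := by omega
      have htd : t ≤ d₀ := by omega
      have hmk : m < k := by omega
      -- Fact C: monotonicity
      have hQR := QLLL.Qval_le hpsd Ms hE hk1 hkn hmk
      -- Fact D
      have hR : PrSeq ρ (testList n Ms (Function.update (fun j => (E j).compl) k (E k))
          (Finset.Icc 1 m ∪ {k})) = PrTest ρ n Ms E {k} * QLLL.Pval ρ E m := by
        rcases Nat.eq_zero_or_pos m with hm0 | hm1
        · rw [hm0, show Finset.Icc 1 0 ∪ {k} = ({k} : Finset ℕ) by simp,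
            QLLL.factD_zero Ms k, QLLL.Pval_zero htr, mul_one]
        · have hmd : m + d₀ < k := by omega
          exact QLLL.factD_pos Ms hrad hm1 hmd hkn (hPne m (by omega))
      -- chain bound
      have hchain : (1-B)^t * QLLL.Pval ρ E m ≤ QLLL.Pval ρ E (k-1) := by
        have hcl : ∀ j, 1 ≤ j → j ≤ k-1 → QLLL.Qval ρ E j ≤ B * QLLL.Pval ρ E (j-1) :=
          fun j hj1 hj2 => ih j (by omega) hj1 (by omega)
        have := QLLL.chain hpsd hc0 hcl m t (by omega)
        rwa [hmt] at this
      have hpk : PrTest ρ n Ms E {k} ≤ p := hp k (Finset.mem_Icc.mpr ⟨hk1, hkn⟩)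
      have hQ : QLLL.Qval ρ E k ≤ p * QLLL.Pval ρ E m := by
        calc QLLL.Qval ρ E k ≤ PrTest ρ n Ms E {k} * QLLL.Pval ρ E m := by
              rw [← hR]; exact hQR
          _ ≤ p * QLLL.Pval ρ E m := mul_le_mul_of_nonneg_right hpk (hPnonneg m)
      rcases Nat.eq_zero_or_pos d₀ with hd0 | hd1
      · -- d₀ = 0 : t = 0, m = k-1, B = p
        have htm : t = 0 := by omega
        have hmm : m = k - 1 := by omega
        rw [hB, if_pos hd0]
        rw [hmm] at hQ
        exact hQ
      · -- d₀ ≥ 1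
        have hd0' : d₀ ≠ 0 := by omega
        rw [hB, if_neg hd0']
        have hcd : (d₀:ℝ)/((d₀:ℝ)+1) ≤ 1 - B := by
          have hd₀pos : (0:ℝ) < (d₀:ℝ)+1 := by positivity
          rw [div_le_iff₀ hd₀pos]
          nlinarith
        have hc1 : (1:ℝ) - B ≤ 1 := by linarith
        have hect : 1 ≤ Real.exp 1 * (1-B)^t := QLLL.exp_pow_bound hd0' hcd hc1 htd
        calc QLLL.Qval ρ E k ≤ p * QLLL.Pval ρ E m := hQ
          _ = p * 1 * QLLL.Pval ρ E m := by ring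
          _ ≤ p * (Real.exp 1 * (1-B)^t) * QLLL.Pval ρ E m := by
              have := mul_le_mul_of_nonneg_left hect hp0
              exact mul_le_mul_of_nonneg_right (by linarith) (hPnonneg m)
          _ = p * Real.exp 1 * ((1-B)^t * QLLL.Pval ρ E m) := by ring
          _ ≤ p * Real.exp 1 * QLLL.Pval ρ E (k-1) :=
              mul_le_mul_of_nonneg_left hchain (mul_nonneg hp0 (Real.exp_pos 1).le)
  -- conclusion
  rw [QLLL.PrTest_prefix Ms (le_refl n)]
  have hPn1 : 0 < QLLL.Pval ρ E (n-1) :=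
    lt_of_le_of_ne (hPnonneg (n-1)) (Ne.symm (hPne (n-1) le_rfl))
  have hQn := claim n hn le_rfl
  have hsucc := QLLL.Pval_succ (ρ := ρ) (E := E) (k := n) hn
  rw [hsucc]
  nlinarith
end
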